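/- Let $V$ be a vector space over $\mathbb{Q}$. For $i=1,2$ let $n_i\ge 1$ be integers, let $p_i(k)=a_0^{(i)}k^{n_i}+a_1^{(i)}k^{n_i-1}+\cdots$ be polynomials of degree $n_i$ with rational coefficients and $a_0^{(i)}>0$, let $\lambda^{(i)}_0,\dots,\lambda^{(i)}_{n_i+1}\in V$, set $\lambda^{(i)}(k)=\sum_{j=0}^{n_i+1}\binom{k}{j}\lambda^{(i)}_j$ and $\mu_i=2a_1^{(i)}/a_0^{(i)}$. Set $n=n_1+n_2$, let $a_0=a_0^{(1)}a_0^{(2)}$ and $a_1=a_0^{(1)}a_1^{(2)}+a_1^{(1)}a_0^{(2)}$ be the top two coefficients of $p_1p_2$, and $\mu=2a_1/a_0$. Suppose $\lambda_0,\dots,\lambda_{n+1}\in V$ satisfy $\sum_{j=0}^{n+1}\binom{k}{j}\lambda_j=p_2(k)\,\lambda^{(1)}(k)+p_1(k)\,\lambda^{(2)}(k)$ for all integers $k\ge 0$. Then $\frac{1}{2a_0(n+1)!}\big[(\mu+n(n+1))\lambda_{n+1}-2(n+1)\lambda_n\big]=\sum_{i=1}^{2}\frac{1}{2a_0^{(i)}(n_i+1)!}\big[(\mu_i+n_i(n_i+1))\lambda^{(i)}_{n_i+1}-2(n_i+1)\lambda^{(i)}_{n_i}\big]$.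 -/

import Mathlib

section CMAux
open Polynomial

lemma descPochhammer_coeff_pred (j : ℕ) :
    (descPochhammer ℚ (j+1)).coeff j = -(j*(j+1)/2 : ℚ) := by
  induction j with
  | zero => simp [descPochhammer_one]
  | succ j ih =>
    rw [descPochhammer_succ_right, ← C_eq_natCast, mul_sub, coeff_sub, coeff_mul_X, coeff_mul_C,
      ih]
    have h1 : (descPochhammer ℚ (j+1)).coeff (j+1) = 1 := by
      have := (monic_descPochhammer ℚ (j+1)).coeff_natDegree
      rwa [descPochhammer_natDegree] at this
    rw [h1]
    push_cast
    ring

lemma poly_eq_of_nat_eval (p q : ℚ[X]) (h : ∀ k : ℕ, p.eval (k:ℚ) = q.eval (k:ℚ)) : p = q := by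
  rw [← sub_eq_zero]
  apply Polynomial.eq_zero_of_infinite_isRoot
  apply Set.infinite_of_injective_forall_mem (f := fun k : ℕ => (k:ℚ)) Nat.cast_injective
  intro k
  simp [Polynomial.IsRoot, h k]

lemma coeff_mul_second (p q : ℚ[X]) (m l : ℕ) (hp : p.natDegree ≤ m+1) (hq : q.natDegree ≤ l+1) :
    (p*q).coeff (m+l+1) = p.coeff (m+1) * q.coeff l + p.coeff m * q.coeff (l+1) := by
  set p' : ℚ[X] := p - C (p.coeff (m+1)) * X^(m+1) with hp'
  set q' : ℚ[X] := q - C (q.coeff (l+1)) * X^(l+1) with hq'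
  have hpd : p'.natDegree ≤ m := by
    rw [natDegree_le_iff_coeff_eq_zero]
    intro N hN
    simp only [hp', coeff_sub, coeff_C_mul, coeff_X_pow]
    rcases eq_or_ne N (m+1) with rfl | hNe
    · simp
    · rw [if_neg hNe, mul_zero, sub_zero]
      exact coeff_eq_zero_of_natDegree_lt (lt_of_le_of_lt hp (by omega))
  have hqd : q'.natDegree ≤ l := by
    rw [natDegree_le_iff_coeff_eq_zero]
    intro N hN
    simp only [hq', coeff_sub, coeff_C_mul, coeff_X_pow]
    rcases eq_or_ne N (l+1) with rfl | hNe
    · simp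
    · rw [if_neg hNe, mul_zero, sub_zero]
      exact coeff_eq_zero_of_natDegree_lt (lt_of_le_of_lt hq (by omega))
  have hpc : p'.coeff m = p.coeff m := by
    simp only [hp', coeff_sub, coeff_C_mul, coeff_X_pow, if_neg (by omega : ¬ m = m+1), mul_zero,
      sub_zero]
  have hqc : q'.coeff l = q.coeff l := by
    simp only [hq', coeff_sub, coeff_C_mul, coeff_X_pow, if_neg (by omega : ¬ l = l+1), mul_zero,
      sub_zero]
  have e1 : (p' * q').coeff (m+l+1) = 0 :=
    coeff_eq_zero_of_natDegree_lt (natDegree_mul_le.trans_lt (by omega))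
  have e2 : (p' * (C (q.coeff (l+1)) * X^(l+1))).coeff (m+l+1) = p.coeff m * q.coeff (l+1) := by
    have : m+l+1 = m+(l+1) := by omega
    rw [this, coeff_mul_add_eq_of_natDegree_le hpd (natDegree_C_mul_X_pow_le _ _), hpc,
      coeff_C_mul, coeff_X_pow, if_pos rfl, mul_one]
  have e3 : ((C (p.coeff (m+1)) * X^(m+1)) * q').coeff (m+l+1) = p.coeff (m+1) * q.coeff l := by
    have : m+l+1 = (m+1)+l := by omega
    rw [this, coeff_mul_add_eq_of_natDegree_le (natDegree_C_mul_X_pow_le _ _) hqd, hqc,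
      coeff_C_mul, coeff_X_pow, if_pos rfl, mul_one]
  have e4 : ((C (p.coeff (m+1)) * X^(m+1)) * (C (q.coeff (l+1)) * X^(l+1))).coeff (m+l+1) = 0 := by
    rw [mul_mul_mul_comm, ← C_mul, ← pow_add, coeff_C_mul, coeff_X_pow,
      if_neg (by omega), mul_zero]
  have hpe : p = p' + C (p.coeff (m+1)) * X^(m+1) := by rw [hp']; ring
  have hqe : q = q' + C (q.coeff (l+1)) * X^(l+1) := by rw [hq']; ring
  calc (p*q).coeff (m+l+1)
      = (p' * q' + p' * (C (q.coeff (l+1)) * X^(l+1)) + ((C (p.coeff (m+1)) * X^(m+1)) * q'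
          + (C (p.coeff (m+1)) * X^(m+1)) * (C (q.coeff (l+1)) * X^(l+1)))).coeff (m+l+1) := by
        congr 1
        conv_lhs => rw [hpe, hqe]
        ring
    _ = p.coeff (m+1) * q.coeff l + p.coeff m * q.coeff (l+1) := by
        rw [coeff_add, coeff_add, coeff_add, e1, e2, e3, e4]; ring

noncomputable def binPoly (N : ℕ) (x : ℕ → ℚ) : ℚ[X] :=
  ∑ j ∈ Finset.range (N+2), C (x j / j.factorial) * descPochhammer ℚ j

lemma binPoly_eval (N : ℕ) (x : ℕ → ℚ) (k : ℕ) :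
    (binPoly N x).eval (k:ℚ) = ∑ j ∈ Finset.range (N+2), (k.choose j : ℚ) * x j := by
  simp only [binPoly, eval_finset_sum, eval_mul, eval_C]
  refine Finset.sum_congr rfl fun j _ => ?_
  rw [descPochhammer_eval_eq_descFactorial, Nat.descFactorial_eq_factorial_mul_choose]
  have : (j.factorial : ℚ) ≠ 0 := Nat.cast_ne_zero.mpr j.factorial_ne_zero
  push_cast
  field_simp

lemma binPoly_natDegree_le (N : ℕ) (x : ℕ → ℚ) : (binPoly N x).natDegree ≤ N+1 := by
  apply natDegree_sum_le_of_forall_le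
  intro j hj
  refine (natDegree_C_mul_le _ _).trans ?_
  rw [descPochhammer_natDegree]
  exact Nat.lt_succ_iff.mp (Finset.mem_range.mp hj)

lemma descPochhammer_coeff_self (j : ℕ) : (descPochhammer ℚ j).coeff j = 1 := by
  have := (monic_descPochhammer ℚ j).coeff_natDegree
  rwa [descPochhammer_natDegree] at this


lemma binPoly_coeff_top (N : ℕ) (x : ℕ → ℚ) :
    (binPoly N x).coeff (N+1) = x (N+1) / (N+1).factorial := by
  rw [binPoly, finset_sum_coeff, Finset.sum_range_succ, Finset.sum_range_succ]
  simp only [coeff_C_mul]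
  have h0 : ∀ j, j < N+1 → (descPochhammer ℚ j).coeff (N+1) = 0 := fun j hj =>
    coeff_eq_zero_of_natDegree_lt (by rw [descPochhammer_natDegree]; omega)
  rw [Finset.sum_eq_zero (fun j hj => by
    rw [h0 j ((Finset.mem_range.mp hj).trans (by omega)), mul_zero]),
    h0 N (by omega), descPochhammer_coeff_self]
  ring

lemma binPoly_coeff_snd (N : ℕ) (x : ℕ → ℚ) :
    (binPoly N x).coeff N
      = x N / N.factorial - (N*(N+1)/2 : ℚ) * (x (N+1) / (N+1).factorial) := by
  rw [binPoly, finset_sum_coeff, Finset.sum_range_succ, Finset.sum_range_succ]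
  simp only [coeff_C_mul]
  have h0 : ∀ j, j < N → (descPochhammer ℚ j).coeff N = 0 := fun j hj =>
    coeff_eq_zero_of_natDegree_lt (by rw [descPochhammer_natDegree]; omega)
  rw [Finset.sum_eq_zero (fun j hj => by
    rw [h0 j (Finset.mem_range.mp hj), mul_zero]),
    descPochhammer_coeff_self, descPochhammer_coeff_pred]
  ring

noncomputable def coeffPoly (N : ℕ) (c : ℕ → ℚ) : ℚ[X] :=
  ∑ i ∈ Finset.range (N+1), C (c i) * X^(N-i)

lemma coeffPoly_eval (N : ℕ) (c : ℕ → ℚ) (k : ℕ) :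
    (coeffPoly N c).eval (k:ℚ) = ∑ i ∈ Finset.range (N+1), c i * (k:ℚ)^(N-i) := by
  simp [coeffPoly, eval_finset_sum]

lemma coeffPoly_natDegree_le (N : ℕ) (c : ℕ → ℚ) : (coeffPoly N c).natDegree ≤ N := by
  apply natDegree_sum_le_of_forall_le
  intro i hi
  exact (natDegree_C_mul_X_pow_le _ _).trans (by omega)

lemma coeffPoly_coeff_top (N : ℕ) (c : ℕ → ℚ) : (coeffPoly N c).coeff N = c 0 := by
  rw [coeffPoly, finset_sum_coeff]
  rw [Finset.sum_eq_single 0]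
  · simp
  · intro i hi hne
    rw [coeff_C_mul, coeff_X_pow, if_neg (by simp at hi; omega), mul_zero]
  · intro h
    simp at h
lemma coeffPoly_coeff_snd (M : ℕ) (c : ℕ → ℚ) : (coeffPoly (M+1) c).coeff M = c 1 := by
  rw [coeffPoly, finset_sum_coeff]
  rw [Finset.sum_eq_single 1]
  · simp
  · intro i hi hne
    rw [coeff_C_mul, coeff_X_pow, if_neg (by simp at hi; omega), mul_zero]
  · intro h
    simp at h
set_option maxHeartbeats 1000000 in
lemma scalar_key (n1 n2 : ℕ) (hn1 : 1 ≤ n1) (hn2 : 1 ≤ n2)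
    (a b : ℕ → ℚ) (ha0 : a 0 ≠ 0) (hb0 : b 0 ≠ 0)
    (x y z : ℕ → ℚ)
    (h : ∀ k : ℕ, ∑ j ∈ Finset.range (n1+n2+2), (k.choose j : ℚ) * x j
      = (∑ i ∈ Finset.range (n2+1), b i * (k:ℚ)^(n2-i))
          * (∑ j ∈ Finset.range (n1+2), (k.choose j : ℚ) * y j)
      + (∑ i ∈ Finset.range (n1+1), a i * (k:ℚ)^(n1-i))
          * (∑ j ∈ Finset.range (n2+2), (k.choose j : ℚ) * z j)) :
    (1 / (2 * (a 0 * b 0) * ((n1+n2+1).factorial : ℚ))) *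
      ((2 * (a 0 * b 1 + a 1 * b 0) / (a 0 * b 0) + ((n1:ℚ)+n2) * ((n1:ℚ)+n2+1)) * x (n1+n2+1)
        - (2*((n1:ℚ)+n2+1)) * x (n1+n2))
    = (1 / (2 * a 0 * ((n1+1).factorial:ℚ)))
        * ((2*a 1/a 0 + (n1:ℚ)*((n1:ℚ)+1))*y (n1+1) - (2*((n1:ℚ)+1))*y n1)
    + (1 / (2 * b 0 * ((n2+1).factorial:ℚ)))
        * ((2*b 1/b 0 + (n2:ℚ)*((n2:ℚ)+1))*z (n2+1) - (2*((n2:ℚ)+1))*z n2) := by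
  obtain ⟨m1, rfl⟩ : ∃ m, n1 = m + 1 := ⟨n1-1, by omega⟩
  obtain ⟨m2, rfl⟩ : ∃ m, n2 = m + 1 := ⟨n2-1, by omega⟩
  have hW : binPoly ((m1+1)+(m2+1)) x
      = coeffPoly (m2+1) b * binPoly (m1+1) y + coeffPoly (m1+1) a * binPoly (m2+1) z := by
    apply poly_eq_of_nat_eval
    intro k
    rw [binPoly_eval, eval_add, eval_mul, eval_mul,
      binPoly_eval, binPoly_eval, coeffPoly_eval, coeffPoly_eval]
    exact h k
  have hf : ∀ m : ℕ, ((m.factorial : ℚ)) ≠ 0 := fun m => Nat.cast_ne_zero.mpr m.factorial_ne_zero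
  -- top coefficient
  have cQY : (coeffPoly (m2+1) b * binPoly (m1+1) y).coeff ((m1+1)+(m2+1)+1)
      = b 0 * (y ((m1+1)+1) / (((m1+1)+1).factorial:ℚ)) := by
    have h2 := coeff_mul_add_eq_of_natDegree_le (coeffPoly_natDegree_le (m2+1) b)
      (binPoly_natDegree_le (m1+1) y)
    rw [coeffPoly_coeff_top, binPoly_coeff_top] at h2
    rw [show (m1+1)+(m2+1)+1 = (m2+1)+((m1+1)+1) from by ring, h2]
  have cPZ : (coeffPoly (m1+1) a * binPoly (m2+1) z).coeff ((m1+1)+(m2+1)+1)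
      = a 0 * (z ((m2+1)+1) / (((m2+1)+1).factorial:ℚ)) := by
    have h2 := coeff_mul_add_eq_of_natDegree_le (coeffPoly_natDegree_le (m1+1) a)
      (binPoly_natDegree_le (m2+1) z)
    rw [coeffPoly_coeff_top, binPoly_coeff_top] at h2
    rw [show (m1+1)+(m2+1)+1 = (m1+1)+((m2+1)+1) from by ring, h2]
  have etop : x ((m1+1)+(m2+1)+1) / ((((m1+1)+(m2+1)+1).factorial : ℚ))
      = b 0 * (y ((m1+1)+1) / (((m1+1)+1).factorial:ℚ))
        + a 0 * (z ((m2+1)+1) / (((m2+1)+1).factorial:ℚ)) := by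
    have h3 := congrArg (fun p => p.coeff ((m1+1)+(m2+1)+1)) hW
    simp only [coeff_add] at h3
    rw [binPoly_coeff_top, cQY, cPZ] at h3
    exact h3
  -- second coefficient
  have cQY2 : (coeffPoly (m2+1) b * binPoly (m1+1) y).coeff ((m1+1)+(m2+1))
      = b 0 * (y (m1+1) / ((m1+1).factorial:ℚ)
          - (((m1+1):ℚ)*(((m1+1):ℚ)+1)/2) * (y ((m1+1)+1) / (((m1+1)+1).factorial:ℚ)))
        + b 1 * (y ((m1+1)+1) / (((m1+1)+1).factorial:ℚ)) := by
    have h2 := coeff_mul_second (coeffPoly (m2+1) b) (binPoly (m1+1) y) m2 (m1+1)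
      (coeffPoly_natDegree_le (m2+1) b) (binPoly_natDegree_le (m1+1) y)
    rw [show m2+(m1+1)+1 = (m1+1)+(m2+1) from by ring] at h2
    rw [h2, coeffPoly_coeff_top, coeffPoly_coeff_snd, binPoly_coeff_top, binPoly_coeff_snd]
    push_cast
    ring
  have cPZ2 : (coeffPoly (m1+1) a * binPoly (m2+1) z).coeff ((m1+1)+(m2+1))
      = a 0 * (z (m2+1) / ((m2+1).factorial:ℚ)
          - (((m2+1):ℚ)*(((m2+1):ℚ)+1)/2) * (z ((m2+1)+1) / (((m2+1)+1).factorial:ℚ)))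
        + a 1 * (z ((m2+1)+1) / (((m2+1)+1).factorial:ℚ)) := by
    have h2 := coeff_mul_second (coeffPoly (m1+1) a) (binPoly (m2+1) z) m1 (m2+1)
      (coeffPoly_natDegree_le (m1+1) a) (binPoly_natDegree_le (m2+1) z)
    rw [show m1+(m2+1)+1 = (m1+1)+(m2+1) from by ring] at h2
    rw [h2, coeffPoly_coeff_top, coeffPoly_coeff_snd, binPoly_coeff_top, binPoly_coeff_snd]
    push_cast
    ring
  have esnd : x ((m1+1)+(m2+1)) / ((((m1+1)+(m2+1)).factorial : ℚ))
      - ((((m1+1)+(m2+1):ℕ):ℚ)*((((m1+1)+(m2+1):ℕ):ℚ)+1)/2)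
          * (x ((m1+1)+(m2+1)+1) / ((((m1+1)+(m2+1)+1).factorial:ℚ)))
      = (b 0 * (y (m1+1) / ((m1+1).factorial:ℚ)
          - (((m1+1):ℚ)*(((m1+1):ℚ)+1)/2) * (y ((m1+1)+1) / (((m1+1)+1).factorial:ℚ)))
        + b 1 * (y ((m1+1)+1) / (((m1+1)+1).factorial:ℚ)))
      + (a 0 * (z (m2+1) / ((m2+1).factorial:ℚ)
          - (((m2+1):ℚ)*(((m2+1):ℚ)+1)/2) * (z ((m2+1)+1) / (((m2+1)+1).factorial:ℚ)))
        + a 1 * (z ((m2+1)+1) / (((m2+1)+1).factorial:ℚ))) := by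
    have h3 := congrArg (fun p => p.coeff ((m1+1)+(m2+1))) hW
    simp only [coeff_add] at h3
    rw [binPoly_coeff_snd, cQY2, cPZ2] at h3
    exact h3
  -- factorial recursions
  have F : ((((m1+1)+(m2+1)+1).factorial : ℚ))
      = (((m1:ℚ)+1)+((m2:ℚ)+1)+1) * ((((m1+1)+(m2+1)).factorial : ℚ)) := by
    rw [Nat.factorial_succ]; push_cast; ring
  have F1 : ((((m1+1)+1).factorial : ℚ)) = (((m1:ℚ)+1)+1) * (((m1+1).factorial : ℚ)) := by
    rw [Nat.factorial_succ]; push_cast; ring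
  have F2 : ((((m2+1)+1).factorial : ℚ)) = (((m2:ℚ)+1)+1) * (((m2+1).factorial : ℚ)) := by
    rw [Nat.factorial_succ]; push_cast; ring
  -- solve for x values
  rw [div_eq_iff (hf _)] at etop
  rw [sub_eq_iff_eq_add, etop, mul_div_cancel_right₀ _ (hf _), div_eq_iff (hf _)] at esnd
  rw [etop, esnd, F, F1, F2]
  push_cast
  -- abstract everything into an algebraic identity
  have h1 : ((m1:ℚ)+1+1) ≠ 0 := by positivity
  have h2 : ((m2:ℚ)+1+1) ≠ 0 := by positivity
  have h3 : ((m1:ℚ)+1+((m2:ℚ)+1)+1) ≠ 0 := by positivity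
  have hg1 := hf ((m1+1)+(m2+1))
  have hg2 := hf (m1+1)
  have hg3 := hf (m2+1)
  clear hW cQY cPZ etop cQY2 cPZ2 esnd F F1 F2 h hf
  generalize ((((m1+1)+(m2+1)).factorial : ℚ)) = f at hg1 ⊢
  generalize (((m1+1).factorial : ℚ)) = f1 at hg2 ⊢
  generalize (((m2+1).factorial : ℚ)) = f2 at hg3 ⊢
  field_simp
  ring

end CMAux

/-- Corollary 4.7 of Fine–Ross: the normalised CM class of a fibred product with product
polarisation is the sum of the normalised CM classes of the factors. -/
theorem cm_of_product
    (V : Type*) [AddCommGroup V] [Module ℚ V]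
    (n1 n2 : ℕ) (hn1 : 1 ≤ n1) (hn2 : 1 ≤ n2)
    (a b : ℕ → ℚ) (ha0 : 0 < a 0) (hb0 : 0 < b 0)
    (p1 p2 : ℕ → ℚ)
    (hp1 : ∀ k : ℕ, p1 k = ∑ i ∈ Finset.range (n1 + 1), a i * (k : ℚ) ^ (n1 - i))
    (hp2 : ∀ k : ℕ, p2 k = ∑ i ∈ Finset.range (n2 + 1), b i * (k : ℚ) ^ (n2 - i))
    (lam1 lam2 : ℕ → V)
    (Lam1 Lam2 : ℕ → V)
    (hLam1 : ∀ k : ℕ, Lam1 k = ∑ j ∈ Finset.range (n1 + 2), ((k.choose j : ℚ)) • lam1 j)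
    (hLam2 : ∀ k : ℕ, Lam2 k = ∑ j ∈ Finset.range (n2 + 2), ((k.choose j : ℚ)) • lam2 j)
    (μ1 μ2 : ℚ) (hμ1 : μ1 = 2 * a 1 / a 0) (hμ2 : μ2 = 2 * b 1 / b 0)
    (n : ℕ) (hn : n = n1 + n2)
    (a0 a1 : ℚ) (ha0' : a0 = a 0 * b 0) (ha1' : a1 = a 0 * b 1 + a 1 * b 0)
    (μ : ℚ) (hμ : μ = 2 * a1 / a0)
    (lam : ℕ → V)
    (hlam : ∀ k : ℕ,
      ∑ j ∈ Finset.range (n + 2), ((k.choose j : ℚ)) • lam j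
        = p2 k • Lam1 k + p1 k • Lam2 k) :
    (1 / (2 * a0 * (n + 1).factorial)) •
        ((μ + n * (n + 1)) • lam (n + 1) - ((2 * (n + 1) : ℚ)) • lam n)
      = (1 / (2 * a 0 * (n1 + 1).factorial)) •
          ((μ1 + n1 * (n1 + 1)) • lam1 (n1 + 1) - ((2 * (n1 + 1) : ℚ)) • lam1 n1)
        + (1 / (2 * b 0 * (n2 + 1).factorial)) •
            ((μ2 + n2 * (n2 + 1)) • lam2 (n2 + 1) - ((2 * (n2 + 1) : ℚ)) • lam2 n2) := by
  subst hn hμ ha0' ha1' hμ1 hμ2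
  rw [← sub_eq_zero, ← Module.forall_dual_apply_eq_zero_iff ℚ]
  intro φ
  have key := scalar_key n1 n2 hn1 hn2 a b (ne_of_gt ha0) (ne_of_gt hb0)
    (fun j => φ (lam j)) (fun j => φ (lam1 j)) (fun j => φ (lam2 j)) ?_
  · simp only [map_sub, map_add, map_smul, smul_eq_mul]
    rw [sub_eq_zero]
    push_cast
    linear_combination key
  · intro k
    have hk := congrArg φ (hlam k)
    simp only [hLam1, hLam2, hp1, hp2, map_sum, map_add, map_smul, smul_eq_mul,
      Finset.mul_sum] at hk
    simp only [Finset.mul_sum]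
    convert hk using 2
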